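/- Assume σ_β(Φ_K) = Φ_K for every β ∈ Φ_K. Let α ∈ Φ_K ∩ Φ⁺ and w ∈ W satisfy l(σ_α w) = l(w) + 1. Then l_K(σ_α w) = l_K(w) + 1. -/

import Mathlib

open Finset
open scoped RealInnerProductSpace

noncomputable section

variable {E : Type*} [NormedAddCommGroup E] [InnerProductSpace ℝ E] [FiniteDimensional ℝ E]

/-- The orthogonal reflection `σ_α` in the hyperplane orthogonal to `α`; for `α ≠ 0` it is
given by the formula `σ_α v = v - (2⟪v,α⟫/⟪α,α⟫) • α`. -/
noncomputable def sigmaRefl (α : E) : E ≃ₗᵢ[ℝ] E :=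
  Submodule.reflection (ℝ ∙ α)ᗮ

/-- The Weyl group `W`: the subgroup of the orthogonal group of `E` generated by the
reflections `σ_α` for `α ∈ Φ`. -/
def Weyl (Φ : Finset E) : Subgroup (E ≃ₗᵢ[ℝ] E) :=
  Subgroup.closure {g | ∃ α ∈ Φ, g = sigmaRefl α}

variable [DecidableEq E]

/-- `Φ⁻ = -Φ⁺`. -/
def negSet (Pos : Finset E) : Finset E := Pos.image (fun x => -x)

/-- Length `l(w) = #(Φ⁺ ∩ wΦ⁻)`. -/
def len (Pos : Finset E) (w : E ≃ₗᵢ[ℝ] E) : ℕ :=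
  (Pos ∩ (negSet Pos).image w).card

/-- Compact length `l_K(w) = #(Φ⁺ ∩ wΦ⁻ ∩ Φ_K)`. -/
def lenK (Pos ΦK : Finset E) (w : E ≃ₗᵢ[ℝ] E) : ℕ :=
  (Pos ∩ (negSet Pos).image w ∩ ΦK).card

/-- `x → y` iff `x = σ_α y` for some `α ∈ Φ` and `l(x) = l(y) + 1`. -/
def Arrow (Φ Pos : Finset E) (x y : E ≃ₗᵢ[ℝ] E) : Prop :=
  (∃ α ∈ Φ, x = sigmaRefl α * y) ∧ len Pos x = len Pos y + 1

/-- Bruhat order: `x < y` iff there is a chain `y → u₁ → ⋯ → u_k → x`. -/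
def BruhatLT (Φ Pos : Finset E) (x y : E ≃ₗᵢ[ℝ] E) : Prop :=
  Relation.TransGen (Arrow Φ Pos) y x

/-- `sigmaRefl` is an involution. -/
lemma sigmaRefl_sigmaRefl (α v : E) : sigmaRefl α (sigmaRefl α v) = v :=
  Submodule.reflection_reflection _ v

lemma sigmaRefl_symm' (α : E) : (sigmaRefl α).symm = sigmaRefl α :=
  Submodule.reflection_symm

lemma sigmaRefl_self (α : E) : sigmaRefl α α = -α :=
  Submodule.reflection_orthogonalComplement_singleton_eq_neg α

lemma sigmaRefl_formula (α v : E) :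
    sigmaRefl α v = v - (2*⟪α,v⟫/(‖α‖^2)) • α := by
  rw [sigmaRefl, Submodule.reflection_orthogonal_apply, Submodule.reflection_apply, Submodule.starProjection_singleton]
  simp only [RCLike.ofReal_real_eq_id, id_eq]
  match_scalars <;> ring

/-- Membership in the image of a finset under a linear isometry equivalence. -/
lemma mem_image_equiv {A : Finset E} {g : E ≃ₗᵢ[ℝ] E} {x : E} :
    x ∈ A.image g ↔ g.symm x ∈ A := by
  constructor
  · rintro h
    rcases Finset.mem_image.mp h with ⟨y, hy, rfl⟩
    simpa using hy
  · intro h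
    exact Finset.mem_image.mpr ⟨g.symm x, h, by simp⟩

theorem statement13
    (Φ : Finset E) (h0 : (0 : E) ∉ Φ)
    (hrefl : ∀ α ∈ Φ, Φ.image (sigmaRefl α) = Φ)
    (hred : ∀ α ∈ Φ, {x : E | x ∈ Φ ∧ ∃ t : ℝ, x = t • α} = {α, -α})
    (f : E) (hf : ∀ α ∈ Φ, ⟪f, α⟫ ≠ 0)
    (Pos : Finset E) (hPos : Pos = Φ.filter fun α => 0 < ⟪f, α⟫)
    (ΦK : Finset E) (hKsub : ΦK ⊆ Φ) (hKsym : ΦK.image (fun x => -x) = ΦK)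
    (hKstab : ∀ β ∈ ΦK, ΦK.image (sigmaRefl β) = ΦK)
    (α : E) (hαK : α ∈ ΦK) (hαP : α ∈ Pos)
    (w : E ≃ₗᵢ[ℝ] E) (hw : w ∈ Weyl Φ)
    (hlen : len Pos (sigmaRefl α * w) = len Pos w + 1) :
    lenK Pos ΦK (sigmaRefl α * w) = lenK Pos ΦK w + 1 := by
  classical
  unfold len at hlen
  unfold lenK
  set t : E ≃ₗᵢ[ℝ] E := sigmaRefl α with ht
  have hαΦ : α ∈ Φ := hKsub hαK
  have tt : ∀ v, t (t v) = v := fun v => sigmaRefl_sigmaRefl α v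
  have htself : t α = -α := sigmaRefl_self α
  -- basic membership facts
  have hPosmem : ∀ x, x ∈ Pos ↔ x ∈ Φ ∧ 0 < ⟪f, x⟫ := by
    intro x; rw [hPos, Finset.mem_filter]
  have hnegmem : ∀ x : E, x ∈ negSet Pos ↔ -x ∈ Pos := by
    intro x
    constructor
    · rintro h
      rcases Finset.mem_image.mp h with ⟨y, hy, rfl⟩
      simpa using hy
    · intro h
      exact Finset.mem_image.mpr ⟨-x, h, by simp⟩
  have hΦsymm : ∀ x ∈ Φ, -x ∈ Φ := by
    intro x hx
    have h1 : sigmaRefl x x ∈ Φ.image (sigmaRefl x) :=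
      Finset.mem_image.mpr ⟨x, hx, rfl⟩
    rw [hrefl x hx] at h1
    rwa [sigmaRefl_self] at h1
  have hPosΦ : ∀ x ∈ Pos, x ∈ Φ := fun x hx => ((hPosmem x).mp hx).1
  have hfpos : ∀ x ∈ Pos, 0 < ⟪f, x⟫ := fun x hx => ((hPosmem x).mp hx).2
  have hfneg : ∀ x, x ∈ negSet Pos → ⟪f, x⟫ < 0 := by
    intro x hx
    have h1 := hfpos _ ((hnegmem x).mp hx)
    rw [inner_neg_right] at h1
    linarith
  have hdisj : ∀ x ∈ Pos, x ∉ negSet Pos := by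
    intro x hx hx'
    have := hfpos x hx
    have := hfneg x hx'
    linarith
  have hsplit : ∀ x ∈ Φ, x ∉ negSet Pos → x ∈ Pos := by
    intro x hx hx'
    rcases lt_or_gt_of_ne (hf x hx) with h | h
    · exact absurd ((hnegmem x).mpr ((hPosmem _).mpr ⟨hΦsymm x hx, by
        rw [inner_neg_right]; linarith⟩)) hx'
    · exact (hPosmem x).mpr ⟨hx, h⟩
  -- the Weyl group preserves Φ
  have hWmem : ∀ g ∈ Weyl Φ, ∀ x, x ∈ Φ ↔ g x ∈ Φ := by
    intro g hg
    refine Subgroup.closure_induction (p := fun g _ => ∀ x, x ∈ Φ ↔ g x ∈ Φ)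
      ?_ ?_ ?_ ?_ hg
    · rintro g ⟨β, hβ, rfl⟩ x
      constructor
      · intro hx
        have h1 : sigmaRefl β x ∈ Φ.image (sigmaRefl β) := Finset.mem_image.mpr ⟨x, hx, rfl⟩
        rwa [hrefl β hβ] at h1
      · intro hx
        have h1 : sigmaRefl β (sigmaRefl β x) ∈ Φ.image (sigmaRefl β) :=
          Finset.mem_image.mpr ⟨_, hx, rfl⟩
        rwa [hrefl β hβ, sigmaRefl_sigmaRefl] at h1
    · intro x; rfl
    · intro a b _ _ ha hb x
      rw [hb x, ha (b x)]; rfl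
    · intro a _ ha x
      have h1 := ha (a⁻¹ x)
      have hinv : a (a⁻¹ x) = x := by
        show a (a.symm x) = x
        simp
      rw [hinv] at h1
      exact h1.symm
  have htW : t ∈ Weyl Φ := Subgroup.subset_closure ⟨α, hαΦ, ht⟩
  have htΦ : ∀ x ∈ Φ, t x ∈ Φ := fun x hx => (hWmem t htW x).mp hx
  have hwΦ : ∀ x, x ∈ Φ ↔ w x ∈ Φ := hWmem w hw
  have hwsymmΦ : ∀ x ∈ Φ, w.symm x ∈ Φ := by
    intro x hx
    have h1 := hwΦ (w.symm x)
    rw [LinearIsometryEquiv.apply_symm_apply] at h1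
    exact h1.mpr hx
  -- t preserves ΦK
  have htK : ∀ x ∈ ΦK, t x ∈ ΦK := by
    intro x hx
    have h1 : sigmaRefl α x ∈ ΦK.image (sigmaRefl α) := Finset.mem_image.mpr ⟨x, hx, rfl⟩
    rwa [hKstab α hαK] at h1
  have hKneg : ∀ x ∈ ΦK, -x ∈ ΦK := by
    intro x hx
    have h1 : -x ∈ ΦK.image (fun x => -x) := Finset.mem_image.mpr ⟨x, hx, rfl⟩
    rwa [hKsym] at h1
  -- inversion sets
  set Nw : Finset E := Pos ∩ (negSet Pos).image w with hNw
  set Ntw : Finset E := Pos ∩ (negSet Pos).image (t * w) with hNtw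
  set S : Finset E := Pos ∩ (negSet Pos).image t with hS
  have hmemNw : ∀ x, x ∈ Nw ↔ x ∈ Pos ∧ w.symm x ∈ negSet Pos := by
    intro x
    rw [hNw, Finset.mem_inter, mem_image_equiv]
  have htwsymm : ∀ x, (t * w).symm x = w.symm (t x) := by
    intro x
    have h1 : (t * w) (w.symm (t x)) = x := by
      show t (w (w.symm (t x))) = x
      rw [LinearIsometryEquiv.apply_symm_apply, tt]
    calc (t * w).symm x = (t * w).symm ((t * w) (w.symm (t x))) := by rw [h1]
    _ = w.symm (t x) := LinearIsometryEquiv.symm_apply_apply _ _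
  have hmemNtw : ∀ x, x ∈ Ntw ↔ x ∈ Pos ∧ w.symm (t x) ∈ negSet Pos := by
    intro x
    rw [hNtw, Finset.mem_inter, mem_image_equiv, htwsymm]
  have hmemS : ∀ x, x ∈ S ↔ x ∈ Pos ∧ t x ∈ negSet Pos := by
    intro x
    rw [hS, Finset.mem_inter, mem_image_equiv, ht, sigmaRefl_symm']
  have hSsubP : ∀ x ∈ S, x ∈ Pos := fun x hx => ((hmemS x).mp hx).1
  have hαS : α ∈ S := by
    rw [hmemS]
    refine ⟨hαP, ?_⟩
    rw [htself, hnegmem, neg_neg]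
    exact hαP
  -- the pairing map φ on S
  set φ : E → E := fun x => -(t x) with hφ
  have hφφ : ∀ x, φ (φ x) = x := by
    intro x; simp only [hφ, map_neg, tt, neg_neg]
  have hφS : ∀ x ∈ S, φ x ∈ S := by
    intro x hx
    rcases (hmemS x).mp hx with ⟨h1, h2⟩
    rw [hmemS]
    constructor
    · show -(t x) ∈ Pos
      exact (hnegmem _).mp h2
    · show t (-(t x)) ∈ negSet Pos
      rw [map_neg, tt, hnegmem, neg_neg]
      exact h1
  have hφK : ∀ x ∈ ΦK, φ x ∈ ΦK := fun x hx => hKneg _ (htK _ hx)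
  have hφα : φ α = α := by
    show -(t α) = α
    rw [htself, neg_neg]
  have hφinj : ∀ x y, φ x = φ y → x = y := by
    intro x y hxy
    have := congrArg φ hxy
    rwa [hφφ, hφφ] at this
  -- the key sum identity and sign of the coefficient
  have hsum : ∀ β : E, β - t β = (2*⟪α,β⟫/(‖α‖^2)) • α := by
    intro β
    rw [ht, sigmaRefl_formula]
    abel
  have hcpos : ∀ β ∈ S, 0 < 2*⟪α,β⟫/(‖α‖^2) := by
    intro β hβ
    rcases (hmemS β).mp hβ with ⟨h1, h2⟩
    have h3 : (0:ℝ) < ⟪f, β - t β⟫ := by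
      rw [inner_sub_right]
      have := hfpos β h1
      have := hfneg _ h2
      linarith
    rw [hsum β, real_inner_smul_right] at h3
    have hfα := hfpos α hαP
    by_contra hc
    push_neg at hc
    nlinarith
  have hkey : ∀ β : E, w.symm β + w.symm (φ β) = (2*⟪α,β⟫/(‖α‖^2)) • w.symm α := by
    intro β
    have h1 : β + φ β = (2*⟪α,β⟫/(‖α‖^2)) • α := by
      show β + -(t β) = _
      rw [← sub_eq_add_neg]
      exact hsum β
    calc w.symm β + w.symm (φ β) = w.symm (β + φ β) := by rw [map_add]
    _ = (2*⟪α,β⟫/(‖α‖^2)) • w.symm α := by rw [h1, map_smul]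
  -- if x ∈ Pos is not in Nw then w.symm x is positive
  have hwsn : ∀ x ∈ Pos, x ∉ Nw → w.symm x ∈ Pos := by
    intro x hx hx'
    apply hsplit _ (hwsymmΦ x (hPosΦ x hx))
    intro hc
    exact hx' ((hmemNw x).mpr ⟨hx, hc⟩)
  -- pairs cannot be both in Nw when α ∉ Nw
  have hpair_notboth : α ∉ Nw → ∀ β ∈ S, β ∈ Nw → φ β ∉ Nw := by
    intro hα β hβS hβ hφβ
    have hc := hcpos β hβS
    have heq := hkey β
    have h1 : ⟪f, w.symm β⟫ < 0 := hfneg _ ((hmemNw β).mp hβ).2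
    have h2 : ⟪f, w.symm (φ β)⟫ < 0 := hfneg _ ((hmemNw (φ β)).mp hφβ).2
    have h3 : 0 < ⟪f, w.symm α⟫ := hfpos _ (hwsn α hαP hα)
    have h4 : ⟪f, w.symm β + w.symm (φ β)⟫ = (2*⟪α,β⟫/(‖α‖^2)) * ⟪f, w.symm α⟫ := by
      rw [heq, real_inner_smul_right]
    rw [inner_add_right] at h4
    nlinarith
  -- pairs cannot be both outside Nw when α ∈ Nw
  have hpair_notneither : α ∈ Nw → ∀ β ∈ S, β ∉ Nw → φ β ∈ Nw := by
    intro hα β hβS hβ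
    by_contra hφβ
    have hc := hcpos β hβS
    have heq := hkey β
    have h1 : 0 < ⟪f, w.symm β⟫ := hfpos _ (hwsn β (hSsubP β hβS) hβ)
    have h2 : 0 < ⟪f, w.symm (φ β)⟫ :=
      hfpos _ (hwsn (φ β) (hSsubP _ (hφS β hβS)) hφβ)
    have h3 : ⟪f, w.symm α⟫ < 0 := hfneg _ ((hmemNw α).mp hα).2
    have h4 : ⟪f, w.symm β + w.symm (φ β)⟫ = (2*⟪α,β⟫/(‖α‖^2)) * ⟪f, w.symm α⟫ := by
      rw [heq, real_inner_smul_right]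
    rw [inner_add_right] at h4
    nlinarith
  -- Step 1: the parts outside S correspond under t
  have hstep1 : ∀ K : Finset E, (∀ x ∈ K, t x ∈ K) →
      ((Ntw ∩ K) \ S).card = ((Nw ∩ K) \ S).card := by
    intro K hK
    have hfwd : ∀ (u : E → E) (A B : Finset E),
        (∀ x, x ∈ A ↔ x ∈ Pos ∧ u (t x) ∈ negSet Pos) →
        (∀ x, x ∈ B ↔ x ∈ Pos ∧ u x ∈ negSet Pos) →
        ∀ x ∈ (A ∩ K) \ S, t x ∈ (B ∩ K) \ S := by
      intro u A B hA hB x hx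
      rw [Finset.mem_sdiff, Finset.mem_inter] at hx ⊢
      obtain ⟨⟨hxA, hxK⟩, hxS⟩ := hx
      rcases (hA x).mp hxA with ⟨h1, h2⟩
      have htx : t x ∈ Pos := by
        apply hsplit _ (htΦ x (hPosΦ x h1))
        intro hc
        exact hxS ((hmemS x).mpr ⟨h1, hc⟩)
      refine ⟨⟨(hB (t x)).mpr ⟨htx, h2⟩, hK x hxK⟩, ?_⟩
      intro hc
      rcases (hmemS (t x)).mp hc with ⟨_, h4⟩
      rw [tt] at h4
      exact hdisj x h1 h4
    refine Finset.card_nbij' t t ?_ ?_ (fun x _ => tt x) (fun x _ => tt x)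
    · exact hfwd w.symm Ntw Nw hmemNtw hmemNw
    · refine hfwd (fun y => w.symm (t y)) Nw Ntw ?_ hmemNtw
      intro y
      rw [hmemNw]
      constructor
      · rintro ⟨h1, h2⟩
        refine ⟨h1, ?_⟩
        show w.symm (t (t y)) ∈ negSet Pos
        rwa [tt]
      · rintro ⟨h1, h2⟩
        rw [tt] at h2
        exact ⟨h1, h2⟩
  -- Step 2: the part of Ntw inside S corresponds to the part of S outside Nw
  have hstep2 : ∀ K : Finset E, (∀ x ∈ K, φ x ∈ K) →
      (Ntw ∩ S ∩ K).card = ((S ∩ K) \ Nw).card := by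
    intro K hK
    refine Finset.card_nbij' φ φ ?_ ?_ (fun x _ => hφφ x) (fun x _ => hφφ x)
    · intro x hx
      rw [Finset.mem_coe, Finset.mem_inter, Finset.mem_inter] at hx
      obtain ⟨⟨hx1, hx2⟩, hx3⟩ := hx
      rw [Finset.mem_coe, Finset.mem_sdiff, Finset.mem_inter]
      refine ⟨⟨hφS x hx2, hK x hx3⟩, ?_⟩
      intro hc
      rcases (hmemNw (φ x)).mp hc with ⟨_, h2⟩
      have h5 : w.symm (φ x) = -(w.symm (t x)) := by
        show w.symm (-(t x)) = _
        rw [map_neg]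
      rw [h5, hnegmem, neg_neg] at h2
      rcases (hmemNtw x).mp hx1 with ⟨_, h4⟩
      exact hdisj _ h2 h4
    · intro x hx
      rw [Finset.mem_coe, Finset.mem_sdiff, Finset.mem_inter] at hx
      obtain ⟨⟨hx1, hx2⟩, hx3⟩ := hx
      rw [Finset.mem_coe, Finset.mem_inter, Finset.mem_inter]
      refine ⟨⟨?_, hφS x hx1⟩, hK x hx2⟩
      rw [hmemNtw]
      refine ⟨hSsubP _ (hφS x hx1), ?_⟩
      have h5 : w.symm (t (φ x)) = -(w.symm x) := by
        show w.symm (t (-(t x))) = _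
        rw [map_neg, tt, map_neg]
      rw [h5, hnegmem, neg_neg]
      exact hwsn x (hSsubP x hx1) hx3
  -- full versions (K = Φ)
  have hNtwΦ : Ntw ∩ Φ = Ntw := by
    apply Finset.inter_eq_left.mpr
    intro x hx
    exact hPosΦ x ((hmemNtw x).mp hx).1
  have hNwΦ : Nw ∩ Φ = Nw := by
    apply Finset.inter_eq_left.mpr
    intro x hx
    exact hPosΦ x ((hmemNw x).mp hx).1
  have hSΦ : S ∩ Φ = S := by
    apply Finset.inter_eq_left.mpr
    intro x hx
    exact hPosΦ x (hSsubP x hx)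
  have hφΦ : ∀ x ∈ Φ, φ x ∈ Φ := fun x hx => hΦsymm _ (htΦ x hx)
  have h1full : (Ntw \ S).card = (Nw \ S).card := by
    have := hstep1 Φ htΦ
    rwa [hNtwΦ, hNwΦ] at this
  have h2full : (Ntw ∩ S).card = (S \ Nw).card := by
    have := hstep2 Φ hφΦ
    rwa [hSΦ, show Ntw ∩ S ∩ Φ = Ntw ∩ S from by
      rw [Finset.inter_assoc, hSΦ]] at this
  -- the length hypothesis gives #(S \ Nw) = #(Nw ∩ S) + 1
  have hstar : (S \ Nw).card = (Nw ∩ S).card + 1 := by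
    have d1 : (Ntw ∩ S).card + (Ntw \ S).card = Ntw.card :=
      Finset.card_inter_add_card_sdiff Ntw S
    have d2 : (Nw ∩ S).card + (Nw \ S).card = Nw.card :=
      Finset.card_inter_add_card_sdiff Nw S
    omega
  -- Step 3: α ∉ Nw
  have hαNw : α ∉ Nw := by
    intro hα
    have hmap : ∀ x ∈ S \ Nw, φ x ∈ (Nw ∩ S).erase α := by
      intro x hx
      rw [Finset.mem_sdiff] at hx
      obtain ⟨hx1, hx2⟩ := hx
      rw [Finset.mem_erase, Finset.mem_inter]
      refine ⟨?_, hpair_notneither hα x hx1 hx2, hφS x hx1⟩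
      intro hc
      have : x = α := by
        have := congrArg φ hc
        rwa [hφφ, hφα] at this
      rw [this] at hx2
      exact hx2 hα
    have hle := Finset.card_le_card_of_injOn φ hmap (fun x _ y _ h => hφinj x y h)
    have hαmem : α ∈ Nw ∩ S := Finset.mem_inter.mpr ⟨hα, hαS⟩
    rw [Finset.card_erase_of_mem hαmem] at hle
    have h1 : 1 ≤ (Nw ∩ S).card := Finset.card_pos.mpr ⟨α, hαmem⟩
    omega
  -- Step 4: for β ∈ S \ Nw with β ≠ α, φ β ∈ Nw
  have hsurjstep : ∀ β ∈ S, β ∉ Nw → β ≠ α → φ β ∈ Nw := by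
    have hmap : ∀ x ∈ Nw ∩ S, φ x ∈ (S \ Nw).erase α := by
      intro x hx
      rw [Finset.mem_inter] at hx
      obtain ⟨hx1, hx2⟩ := hx
      rw [Finset.mem_erase, Finset.mem_sdiff]
      refine ⟨?_, hφS x hx2, hpair_notboth hαNw x hx2 hx1⟩
      intro hc
      have hxα : x = α := by
        have := congrArg φ hc
        rwa [hφφ, hφα] at this
      rw [hxα] at hx1
      exact hαNw hx1
    have hαmem : α ∈ S \ Nw := Finset.mem_sdiff.mpr ⟨hαS, hαNw⟩
    have hcard : ((S \ Nw).erase α).card ≤ (Nw ∩ S).card := by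
      rw [Finset.card_erase_of_mem hαmem]
      omega
    have hsurj := Finset.surj_on_of_inj_on_of_card_le (fun x _ => φ x)
      (fun a ha => hmap a ha) (fun x y hx hy h => hφinj x y h) hcard
    intro β hβS hβNw hβα
    have hβmem : β ∈ (S \ Nw).erase α :=
      Finset.mem_erase.mpr ⟨hβα, Finset.mem_sdiff.mpr ⟨hβS, hβNw⟩⟩
    rcases hsurj β hβmem with ⟨γ, hγ, hγeq⟩
    have : φ β = γ := by
      rw [hγeq, hφφ]
    rw [this]
    exact (Finset.mem_inter.mp hγ).1
  -- Step 5: the compact count inside S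
  have hKstar : ((S ∩ ΦK) \ Nw).card = (Nw ∩ S ∩ ΦK).card + 1 := by
    have hαmem : α ∈ (S ∩ ΦK) \ Nw :=
      Finset.mem_sdiff.mpr ⟨Finset.mem_inter.mpr ⟨hαS, hαK⟩, hαNw⟩
    have hbij : (((S ∩ ΦK) \ Nw).erase α).card = (Nw ∩ S ∩ ΦK).card := by
      refine Finset.card_nbij' φ φ ?_ ?_ (fun x _ => hφφ x) (fun x _ => hφφ x)
      · intro x hx
        rw [Finset.mem_coe, Finset.mem_erase, Finset.mem_sdiff, Finset.mem_inter] at hx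
        obtain ⟨hxα, ⟨hxS, hxK⟩, hxNw⟩ := hx
        rw [Finset.mem_coe, Finset.mem_inter, Finset.mem_inter]
        exact ⟨⟨hsurjstep x hxS hxNw hxα, hφS x hxS⟩, hφK x hxK⟩
      · intro x hx
        rw [Finset.mem_coe, Finset.mem_inter, Finset.mem_inter] at hx
        obtain ⟨⟨hx1, hx2⟩, hx3⟩ := hx
        rw [Finset.mem_coe, Finset.mem_erase, Finset.mem_sdiff, Finset.mem_inter]
        refine ⟨?_, ⟨hφS x hx2, hφK x hx3⟩, hpair_notboth hαNw x hx2 hx1⟩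
        intro hc
        have hxα : x = α := by
          have := congrArg φ hc
          rwa [hφφ, hφα] at this
        rw [hxα] at hx1
        exact hαNw hx1
    rw [Finset.card_erase_of_mem hαmem] at hbij
    have h1 : 1 ≤ ((S ∩ ΦK) \ Nw).card := Finset.card_pos.mpr ⟨α, hαmem⟩
    omega
  -- assemble everything
  have h1K : ((Ntw ∩ ΦK) \ S).card = ((Nw ∩ ΦK) \ S).card := hstep1 ΦK htK
  have h2K : (Ntw ∩ S ∩ ΦK).card = ((S ∩ ΦK) \ Nw).card := hstep2 ΦK hφK
  have dtw : (Ntw ∩ ΦK ∩ S).card + ((Ntw ∩ ΦK) \ S).card = (Ntw ∩ ΦK).card :=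
    Finset.card_inter_add_card_sdiff _ S
  have dw : (Nw ∩ ΦK ∩ S).card + ((Nw ∩ ΦK) \ S).card = (Nw ∩ ΦK).card :=
    Finset.card_inter_add_card_sdiff _ S
  rw [Finset.inter_right_comm] at dtw dw
  omega
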